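/- arXiv:2511.16190 — 4 statements merged into one kernel-verified Lean document; each statement's English description precedes it below -/
import Mathlib

section
/- Let φ be a continuous semi-dynamical system on a metric space with a nonempty compact absorbing set B ∈ S. Then A := Ω(B) attracts B: lim_{t→+∞} dist(φ(t, B), A) = 0, where dist(C, A) = sup_{x∈C} inf_{y∈A} d(x, y) is the Hausdorff semi-distance. -/
open Set

/-- For a continuous semi-dynamical system `φ` with a nonempty compact
absorbing set `B ∈ S`, the omega-limit set `A := Ω(B)` attracts `B`:
`dist (φ t '' B, A) → 0` as `t → +∞`, where `dist` is the Hausdorff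
semi-distance `sup_{x ∈ C} inf_{y ∈ A} d(x, y)`. -/
theorem stmt_5 {X : Type*} [MetricSpace X]
    (φ : ℝ → X → X) (S : Set (Set X)) (B : Set X)
    (hφ0 : ∀ x, φ 0 x = x)
    (hφadd : ∀ t s : ℝ, 0 ≤ t → 0 ≤ s → ∀ x, φ (t + s) x = φ t (φ s x))
    (hS_closed : ∀ D ∈ S, IsClosed D)
    (hS_incl : ∀ D₁ ∈ S, ∀ D₂ : Set X, IsClosed D₂ → D₂ ⊆ D₁ → D₂ ∈ S)
    (hφcont : ∀ t : ℝ, 0 ≤ t → ∀ D ∈ S, ContinuousOn (φ t) D)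
    (hB : B ∈ S) (hBne : B.Nonempty) (hBcpt : IsCompact B)
    (habs : ∀ D ∈ S, ∃ T > 0, ∀ t ≥ T, φ t '' D ⊆ B) :
    ∀ ε > 0, ∃ T : ℝ, ∀ t ≥ T, ∀ x ∈ φ t '' B,
      Metric.infDist x (⋂ s ∈ Ici (0 : ℝ), closure (⋃ r ∈ Ici s, φ r '' B)) < ε := by
  set A := ⋂ s ∈ Ici (0 : ℝ), closure (⋃ r ∈ Ici s, φ r '' B) with hAdef
  intro ε hε
  by_contra h
  push_neg at h
  obtain ⟨T₀, hT₀pos, habsB⟩ := habs B hB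
  choose t ht y hy hdist using fun n : ℕ => h (max T₀ n)
  have hyB : ∀ n, y n ∈ B := fun n =>
    habsB (t n) (le_trans (le_max_left _ _) (ht n)) (hy n)
  obtain ⟨z, hzB, ψ, hψ, hlim⟩ := hBcpt.tendsto_subseq hyB
  have hzA : z ∈ A := by
    simp only [hAdef, mem_iInter]
    intro s hs
    refine mem_closure_of_tendsto hlim ?_
    filter_upwards [Filter.eventually_ge_atTop ⌈s⌉₊] with n hn
    refine mem_iUnion₂.mpr ⟨t (ψ n), ?_, hy (ψ n)⟩
    have h1 : s ≤ (ψ n : ℝ) := le_trans (Nat.le_ceil s)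
      (by exact_mod_cast le_trans hn hψ.le_apply)
    exact le_trans h1 (le_trans (le_max_right _ _) (ht (ψ n)))
  have h0 : Metric.infDist z A = 0 := Metric.infDist_zero_of_mem hzA
  have hge : ε ≤ Metric.infDist z A := by
    refine ge_of_tendsto (((Metric.continuous_infDist_pt A).tendsto z).comp hlim) ?_
    exact Filter.Eventually.of_forall fun n => hdist (ψ n)
  linarith
end

section
/- Let H be a Hilbert space with a Gelfand triple V ⊂ H ⊂ V*, where λ* > 0 satisfies ‖u‖_V² ≥ (λ*+1)‖u‖² for u ∈ V (Poincaré). Suppose F: H × P₂(H) → H satisfies: (monotonicity) 2⟨F(u,μ)−F(v,ν), u−v⟩_{V*,V} ≤ C₁ W₂(μ,ν)² + C₂‖u−v‖², and (growth) 2⟨F(u,μ), u⟩ ≤ λ₁‖u‖² + λ₂·μ(‖·‖²) + C. Define A(u,μ) := Δu + F(u,μ) (so 2⟨Δu,u⟩_{V*,V} = −2‖u‖_V²). If C₁ + C₂ < 2λ*, then there exist constants η₁ > η₂ > 0 and C' > 0 such that for all u ∈ V and μ ∈ P₂(H): 2⟨A(u,μ), u⟩_{V*,V} ≤ −η₁‖u‖²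 + η₂·μ(‖·‖²) + C'. -/
set_option maxHeartbeats 1000000


/-- Abstract form of Lemma 5.1: in a Gelfand triple `V ⊂ H ⊂ V*` with
Poincaré constant `λ* > 0` (`‖u‖_V² ≥ (λ*+1)‖u‖²`), if
`F : H × P₂(H) → H` satisfies the monotonicity condition
`2⟨F(u,μ)−F(v,ν), u−v⟩ ≤ C₁ W₂(μ,ν)² + C₂ ‖u−v‖²` and the growth condition
`2⟨F(u,μ), u⟩ ≤ λ₁‖u‖² + λ₂ μ(‖·‖²) + C`, and `A(u,μ) := Δu + F(u,μ)` with
`⟨Δu, u⟩ = −‖u‖_V²`, and `C₁ + C₂ < 2λ*`, then there exist `η₁ > η₂ > 0` and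
`C' > 0` such that `2⟨A(u,μ), u⟩ ≤ −η₁‖u‖² + η₂ μ(‖·‖²) + C'` for all `u, μ`.

Here `V` and `D` (the dual) are abstract real vector spaces, `pr` is the
`V*`-`V` dual pairing, `nV`/`nH` the `V`- and `H`-norms, `M` the space of
probability measures with second moment `m` and 2-Wasserstein distance `W`,
and `δ₀ ∈ M` the Dirac mass at the origin (so `W(μ,δ₀)² = μ(‖·‖²)`). -/
theorem stmt_6 {V D M : Type*} [AddCommGroup V] [Module ℝ V]
    [AddCommGroup D] [Module ℝ D]
    (pr : D →ₗ[ℝ] V →ₗ[ℝ] ℝ)         -- the V*-V dual pairing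
    (nV nH : V → ℝ)                   -- V-norm and H-norm
    (m : M → ℝ)                       -- second moment μ(‖·‖²)
    (W : M → M → ℝ)                   -- 2-Wasserstein distance
    (δ₀ : M)                          -- Dirac mass at 0
    (Δ : V →ₗ[ℝ] D) (F : V → M → D)
    (lamStar C₁ C₂ lam₁ lam₂ C : ℝ)
    (hlamStar : 0 < lamStar)
    (hC₁ : 0 ≤ C₁) (hC₂ : 0 ≤ C₂) (hlam₁ : 0 ≤ lam₁) (hlam₂ : 0 ≤ lam₂) (hC : 0 ≤ C)
    (hnV : ∀ u, 0 ≤ nV u) (hnH : ∀ u, 0 ≤ nH u)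
    (hm : ∀ μ, 0 ≤ m μ) (hW : ∀ μ ν, 0 ≤ W μ ν)
    (hWδ₀ : ∀ μ, W μ δ₀ ^ 2 = m μ) (hmδ₀ : m δ₀ = 0)
    (hPoincare : ∀ u, nV u ^ 2 ≥ (lamStar + 1) * nH u ^ 2)
    (hΔ : ∀ u, pr (Δ u) u = -(nV u ^ 2))
    (hmono : ∀ u v μ ν,
      2 * pr (F u μ - F v ν) (u - v) ≤ C₁ * W μ ν ^ 2 + C₂ * nH (u - v) ^ 2)
    (hgrowth : ∀ u μ, 2 * pr (F u μ) u ≤ lam₁ * nH u ^ 2 + lam₂ * m μ + C)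
    (hsmall : C₁ + C₂ < 2 * lamStar) :
    ∃ η₁ η₂ C' : ℝ, η₁ > η₂ ∧ η₂ > 0 ∧ C' > 0 ∧
      ∀ u μ, 2 * pr (Δ u + F u μ) u ≤ -η₁ * nH u ^ 2 + η₂ * m μ + C' := by
  classical
  set K : ℝ := lam₁ + 2*C₁ + 2 with hKdef
  have hK2 : (2:ℝ) ≤ K := by simp only [hKdef]; linarith
  have hKpos : (0:ℝ) < K := by linarith
  set t : ℝ := (2*K)⁻¹ with htdef
  have ht : 0 < t := by positivity
  have htK : 2*K*t = 1 := by rw [htdef]; exact mul_inv_cancel₀ (mul_pos two_pos hKpos).ne'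
  have ht4 : t ≤ 1/4 := by
    rw [htdef]
    rw [show (1:ℝ)/4 = (4:ℝ)⁻¹ by norm_num]
    exact inv_anti₀ (by norm_num) (by linarith)
  have hs : (3:ℝ)/4 ≤ 1 - t := by linarith
  have hspos : (0:ℝ) < 1 - t := by linarith
  have hlam1t : lam₁ * t ≤ 1/2 := by nlinarith [mul_le_mul_of_nonneg_right (show lam₁ ≤ K by simp only [hKdef]; linarith) ht.le]
  have hC1t : C₁ * t ≤ 1/4 := by nlinarith [mul_le_mul_of_nonneg_right (show 2*C₁ ≤ K by simp only [hKdef]; linarith) ht.le]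
  have hL : (0:ℝ) < lamStar + 1 := by linarith
  clear_value K t
  refine ⟨2*(lamStar+1) - C₂*(1-t) - lam₁*t, C₁ + 1/2, 2*K*C + 1, ?_, by linarith, ?_, ?_⟩
  · linarith [mul_nonneg hC₂ ht.le]
  · nlinarith [mul_nonneg (mul_nonneg (by norm_num : (0:ℝ) ≤ 2) hKpos.le) hC]
  · intro u μ
    have hu1 : u - t • u = (1-t) • u := by rw [sub_smul, one_smul]
    have h1 := hmono u (t • u) μ δ₀
    rw [hu1, hWδ₀] at h1
    simp only [map_sub, map_smul, LinearMap.sub_apply, LinearMap.smul_apply, smul_eq_mul] at h1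
    have h2 := hgrowth (t • u) δ₀
    rw [hmδ₀] at h2
    simp only [map_smul, LinearMap.smul_apply, smul_eq_mul, mul_zero, add_zero] at h2
    have e1 : nV ((1-t) • u) ^ 2 = (1-t)^2 * nV u ^ 2 := by
      have a1 := hΔ ((1-t) • u)
      have a2 := hΔ u
      simp only [map_smul, LinearMap.smul_apply, smul_eq_mul] at a1
      rw [a2] at a1
      linear_combination a1
    have e2 : nV (t • u) ^ 2 = t^2 * nV u ^ 2 := by
      have a1 := hΔ (t • u)
      have a2 := hΔ u
      simp only [map_smul, LinearMap.smul_apply, smul_eq_mul] at a1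
      rw [a2] at a1
      linear_combination a1
    have f3 : (lamStar + 1) * nH ((1-t) • u) ^ 2 ≤ (1-t)^2 * nV u ^ 2 := by
      have := hPoincare ((1-t) • u); rw [e1] at this; linarith
    have f4 : (lamStar + 1) * nH (t • u) ^ 2 ≤ t^2 * nV u ^ 2 := by
      have := hPoincare (t • u); rw [e2] at this; linarith
    have f5 : (lamStar + 1) * nH u ^ 2 ≤ nV u ^ 2 := by linarith [hPoincare u]
    simp only [map_add, LinearMap.add_apply]
    rw [hΔ u]
    -- abbreviations
    set P : ℝ := pr (F u μ) u with hP
    set Q : ℝ := pr (F (t • u) δ₀) u with hQ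
    set a : ℝ := nV u ^ 2 with ha
    set b : ℝ := nH u ^ 2 with hb
    set A1 : ℝ := nH ((1-t) • u) ^ 2 with hA1
    set A2 : ℝ := nH (t • u) ^ 2 with hA2
    have hη₁pos : 0 < 2*(lamStar+1) - C₂*(1-t) - lam₁*t := by
      linarith [mul_nonneg hC₂ ht.le]
    have g1 := mul_le_mul_of_nonneg_right h1 (show (0:ℝ) ≤ t*(lamStar+1) from mul_nonneg ht.le hL.le)
    have g2 := mul_le_mul_of_nonneg_right h2 (show (0:ℝ) ≤ (1-t)*(lamStar+1) from mul_nonneg hspos.le hL.le)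
    have g3 := mul_le_mul_of_nonneg_right f3 (show (0:ℝ) ≤ t*C₂ from mul_nonneg ht.le hC₂)
    have g4 := mul_le_mul_of_nonneg_right f4 (show (0:ℝ) ≤ (1-t)*lam₁ from mul_nonneg hspos.le hlam₁)
    have g5 := mul_le_mul_of_nonneg_right f5
      (show (0:ℝ) ≤ t*(1-t)*(2*(lamStar+1) - C₂*(1-t) - lam₁*t) from
        mul_nonneg (mul_nonneg ht.le hspos.le) hη₁pos.le)
    have hmm2 : (0:ℝ) ≤ (lamStar+1) * m μ * t * (1/2 - C₁*t - t/2) :=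
      mul_nonneg (mul_nonneg (mul_nonneg hL.le (hm μ)) ht.le) (by linarith)
    have hst : (0:ℝ) ≤ (1-t)*(lamStar+1)*t := mul_nonneg (mul_nonneg hspos.le hL.le) ht.le
    have e3 : (1-t)*t*(lamStar+1)*(2*K*C+1) = (1-t)*(lamStar+1)*C + (1-t)*(lamStar+1)*t := by
      linear_combination ((1-t)*(lamStar+1)*C) * htK
    have key : (1-t)*t*(lamStar+1) * (2*(-a+P)) ≤
        (1-t)*t*(lamStar+1) * (-(2*(lamStar+1) - C₂*(1-t) - lam₁*t)*b + (C₁+1/2)*m μ + (2*K*C+1)) := by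
      linarith [g1, g2, g3, g4, g5, hmm2, e3, hst]
    have hstL : (0:ℝ) < (1-t)*t*(lamStar+1) := by positivity
    calc 2*(-a+P) ≤ -(2*(lamStar+1) - C₂*(1-t) - lam₁*t)*b + (C₁+1/2)*m μ + (2*K*C+1) :=
          le_of_mul_le_mul_left key hstL
      _ = _ := by ring
end

section
/- Suppose F: H × P₂(H) → H satisfies the coercivity 2⟨F(u,μ), u⟩ ≤ λ₁‖u‖² + λ₂ μ(‖·‖²) + C, and suppose 2⟨Au + B(u,u), u⟩ ≤ −2ν_c‖u‖_V² for u ∈ V with ‖u‖_V² ≥ γ²‖u‖². If λ₁ + λ₂ < 2γ²ν_c, then for every λ₁' ∈ [0, 2ν_c − (λ₁+λ₂)/γ²) there exist λ₂' > λ₂ and C' > 0 such that for all u ∈ V and μ ∈ P₂(H): 2⟨Au + B(u,u) + F(u,μ), u⟩ ≤ −λ₁'‖u‖_V² − λ₂'‖u‖² + λ₂ μ(‖·‖²) + C'. -/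
/-- Abstract form of Lemma 5.7(i): if `2⟨Au + B(u,u), u⟩ ≤ −2ν_c‖u‖_V²`,
`‖u‖_V² ≥ γ²‖u‖²` (Poincaré), and `F` is coercive,
`2⟨F(u,μ), u⟩ ≤ λ₁‖u‖² + λ₂ μ(‖·‖²) + C`, with `λ₁ + λ₂ < 2γ²ν_c`, then for
every `λ₁' ∈ [0, 2ν_c − (λ₁+λ₂)/γ²)` there exist `λ₂' > λ₂` and `C' > 0`
such that
`2⟨Au + B(u,u) + F(u,μ), u⟩ ≤ −λ₁'‖u‖_V² − λ₂'‖u‖² + λ₂ μ(‖·‖²) + C'`.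
Here `pAB u` abstracts `⟨Au + B(u,u), u⟩` and `pF u μ` abstracts
`⟨F(u,μ), u⟩`. -/
theorem stmt_15 {V M : Type*}
    (nH nV : V → ℝ)             -- H-norm and V-norm
    (m : M → ℝ)                 -- second moment μ(‖·‖²)
    (pAB : V → ℝ)               -- u ↦ ⟨Au + B(u,u), u⟩
    (pF : V → M → ℝ)            -- (u,μ) ↦ ⟨F(u,μ), u⟩
    (νc γ lam₁ lam₂ C : ℝ)
    (hνc : 0 < νc) (hγ : 0 < γ)
    (hlam₁ : 0 ≤ lam₁) (hlam₂ : 0 ≤ lam₂) (hC : 0 ≤ C)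
    (hnH : ∀ u, 0 ≤ nH u) (hnV : ∀ u, 0 ≤ nV u) (hm : ∀ μ, 0 ≤ m μ)
    (hPoincare : ∀ u, nV u ^ 2 ≥ γ ^ 2 * nH u ^ 2)
    (hAB : ∀ u, 2 * pAB u ≤ -2 * νc * nV u ^ 2)
    (hF : ∀ u μ, 2 * pF u μ ≤ lam₁ * nH u ^ 2 + lam₂ * m μ + C)
    (hsmall : lam₁ + lam₂ < 2 * γ ^ 2 * νc) :
    ∀ lam₁' : ℝ, 0 ≤ lam₁' → lam₁' < 2 * νc - (lam₁ + lam₂) / γ ^ 2 →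
      ∃ lam₂' > lam₂, ∃ C' > 0, ∀ u μ,
        2 * (pAB u + pF u μ) ≤
          -lam₁' * nV u ^ 2 - lam₂' * nH u ^ 2 + lam₂ * m μ + C' := by
  intro lam₁' h0 hlt
  have hγ2 : (0:ℝ) < γ ^ 2 := by positivity
  refine ⟨(2 * νc - lam₁') * γ ^ 2 - lam₁, ?_, C + 1, by linarith, ?_⟩
  · have h : (lam₁ + lam₂) / γ ^ 2 < 2 * νc - lam₁' := by linarith
    have := (div_lt_iff₀ hγ2).mp h
    nlinarith
  · intro u μ
    have h1 := hAB u
    have h2 := hF u μ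
    have hP := hPoincare u
    have hcoef : 0 ≤ 2 * νc - lam₁' := by
      have : (0:ℝ) ≤ (lam₁ + lam₂) / γ ^ 2 := by positivity
      linarith
    nlinarith [mul_le_mul_of_nonneg_left hP hcoef]
end

section
/- Let φ: ℝ₊ × Ω × P* × X → X be a jointly continuous cocycle over a metric dynamical system θ₁ and a set-valued backward extension Θ₂ on a compact set P*, and assume φ is pullback D-asymptotically compact: for any ω, D ∈ D, t_n → ∞, p_n ∈ P*, q_n ∈ Θ_{2,−t_n}p_n, x_n ∈ D(θ_{1,−t_n}ω), the sequence φ(t_n, θ_{1,−t_n}ω, q_n, x_n) has a convergent subsequence. Then for every ω and p ∈ P*, the set Ã(ω,p) := ⋂_{τ≥0} closure(⋃_{t≥τ} ⋃_{q∈Θ_{2,−t}p} φ(t, θ_{1,−t}ω, q, K(θ_{1,−t}ω))) is nonempty, where K ∈ D is a nonempty closed attracting set. -/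
open Set Filter

/-- Step 1 of Theorem 2.9: for a jointly continuous, pullback
`𝒟`-asymptotically compact cocycle `φ` over a metric dynamical system `θ₁`
and the set-valued backward extension of `θ₂` on the compact global attractor
`P*`, and a nonempty closed attracting set `K ∈ 𝒟`, the set
`Ã(ω,p) := ⋂_{τ≥0} closure(⋃_{t≥τ} ⋃_{q ∈ Θ_{2,−t} p} φ(t, θ₁(−t)ω, q, K(θ₁(−t)ω)))`
is nonempty for every `ω` and `p ∈ P*`. Here
`Θ_{2,−t} p = {q ∈ P* : θ₂ t q = p}`. -/
theorem stmt_19 {Ω P X : Type*} [MetricSpace P] [MetricSpace X]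
    (θ₁ : ℝ → Ω → Ω) (θ₂ : ℝ → P → P) (Pstar : Set P)
    (φ : ℝ → Ω → P → X → X)
    (𝒟 : Set (Ω → Set X)) (K : Ω → Set X)
    (hθ₁0 : ∀ ω, θ₁ 0 ω = ω)
    (hθ₁add : ∀ t s : ℝ, ∀ ω, θ₁ (t + s) ω = θ₁ t (θ₁ s ω))
    (hθ₂0 : ∀ p, θ₂ 0 p = p)
    (hθ₂add : ∀ t s : ℝ, 0 ≤ t → 0 ≤ s → ∀ p, θ₂ (t + s) p = θ₂ t (θ₂ s p))
    (hPstar_ne : Pstar.Nonempty) (hPstar_cpt : IsCompact Pstar)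
    (hPstar_inv : ∀ t : ℝ, 0 ≤ t → θ₂ t '' Pstar = Pstar)
    (hφ0 : ∀ ω p x, φ 0 ω p x = x)
    (hφcoc : ∀ s t : ℝ, 0 ≤ s → 0 ≤ t → ∀ ω, ∀ p ∈ Pstar, ∀ x,
      φ (s + t) ω p x = φ t (θ₁ s ω) (θ₂ s p) (φ s ω p x))
    -- joint continuity of φ(t,ω,·,·) on P* × X
    (hφcont : ∀ t : ℝ, 0 ≤ t → ∀ ω,
      ContinuousOn (fun px : P × X => φ t ω px.1 px.2) (Pstar ×ˢ univ))
    -- K is a nonempty closed member of 𝒟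
    (hK𝒟 : K ∈ 𝒟) (hKne : ∀ ω, (K ω).Nonempty) (hKcl : ∀ ω, IsClosed (K ω))
    -- K is attracting
    (hKattr : ∀ ω, ∀ B ∈ 𝒟, ∀ ε > 0, ∃ T : ℝ, ∀ t ≥ T, ∀ p ∈ Pstar,
      ∀ x ∈ B (θ₁ (-t) ω), Metric.infDist (φ t (θ₁ (-t) ω) p x) (K ω) < ε)
    -- pullback 𝒟-asymptotic compactness of φ
    (hAC : ∀ ω, ∀ B ∈ 𝒟, ∀ (tn : ℕ → ℝ) (pn qn : ℕ → P) (xn : ℕ → X),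
      Tendsto tn atTop atTop → (∀ n, 0 ≤ tn n) →
      (∀ n, pn n ∈ Pstar) →
      (∀ n, qn n ∈ Pstar ∧ θ₂ (tn n) (qn n) = pn n) →
      (∀ n, xn n ∈ B (θ₁ (-(tn n)) ω)) →
      ∃ (ns : ℕ → ℕ) (x : X), StrictMono ns ∧
        Tendsto (fun k => φ (tn (ns k)) (θ₁ (-(tn (ns k))) ω) (qn (ns k))
          (xn (ns k))) atTop (nhds x)) :
    ∀ ω : Ω, ∀ p ∈ Pstar,
      (⋂ τ ∈ Ici (0:ℝ), closure (⋃ t ∈ Ici τ,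
        ⋃ q ∈ {q ∈ Pstar | θ₂ t q = p},
          φ t (θ₁ (-t) ω) q '' K (θ₁ (-t) ω))).Nonempty := by
  intro ω p hp
  -- choose preimages qn of p under θ₂ n
  have hq : ∀ n : ℕ, ∃ q ∈ Pstar, θ₂ (n : ℝ) q = p := by
    intro n
    have := hPstar_inv (n : ℝ) (by positivity)
    rw [← this] at hp
    obtain ⟨q, hq1, hq2⟩ := hp
    exact ⟨q, hq1, hq2⟩
  choose qn hqnP hqnθ using hq
  choose xn hxn using fun n : ℕ => hKne (θ₁ (-(n : ℝ)) ω)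
  obtain ⟨ns, x, hns, htend⟩ := hAC ω K hK𝒟 (fun n => (n : ℝ)) (fun _ => p) qn xn
    tendsto_natCast_atTop_atTop (fun n => by positivity) (fun _ => hp)
    (fun n => ⟨hqnP n, hqnθ n⟩) hxn
  refine ⟨x, ?_⟩
  simp only [mem_iInter]
  intro τ hτ
  refine mem_closure_of_tendsto htend ?_
  have hbig : Tendsto (fun k => ((ns k : ℝ))) atTop atTop :=
    tendsto_natCast_atTop_atTop.comp hns.tendsto_atTop
  filter_upwards [hbig.eventually_ge_atTop τ] with k hk
  refine mem_iUnion₂.2 ⟨(ns k : ℝ), hk, ?_⟩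
  refine mem_iUnion₂.2 ⟨qn (ns k), ⟨hqnP _, hqnθ _⟩, ?_⟩
  exact mem_image_of_mem _ (hxn (ns k))
end
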